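/- arXiv:2604.10977 — 5 statements merged into one kernel-verified Lean document; each statement's English description precedes it below -/
import Mathlib

section
/- Let R > 0, E₀ ∈ ℝ, and let w, b : ℝ → ℝ be continuous and nonnegative on [0, R], and suppose there exists k₀ ∈ [0, R] with w(k₀)·b(k₀) > 0. Define Z(β) := 2·∫₀^R w(k)·exp(−β·E₀)·sinh(β·b(k)) dk. Then there do not exist a real number E⋆ and a nonzero (Borel) measure ν on ℝ with ν((−∞,0)) = 0 such that for every β > 0 the function λ ↦ exp(−β·λ) is ν-integrable and Z(β) = exp(−β·E⋆)·∫ exp(−β·λ) dν(λ). Equivalently, Z is not the ordinary thermal trace of any lower-bounded self-adjoint β-independent Hamiltonian. -/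
open MeasureTheory

/-- Thermal-trace obstruction: a compact-support branch-difference amplitude
with strictly positive `w(k₀)·b(k₀)` somewhere cannot be written as
`e^{−βE⋆}·∫ e^{−βλ} dν(λ)` for a nonzero measure `ν` supported on `[0, ∞)`,
i.e. it is not the ordinary thermal trace of any lower-bounded self-adjoint
β-independent Hamiltonian. -/
theorem branch_difference_not_thermal_trace
    (R E₀ : ℝ) (hR : 0 < R) (w b : ℝ → ℝ)
    (hw : ContinuousOn w (Set.Icc 0 R)) (hb : ContinuousOn b (Set.Icc 0 R))
    (hw0 : ∀ k ∈ Set.Icc 0 R, 0 ≤ w k) (hb0 : ∀ k ∈ Set.Icc 0 R, 0 ≤ b k)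
    (k₀ : ℝ) (hk₀ : k₀ ∈ Set.Icc 0 R) (hpos : 0 < w k₀ * b k₀) :
    ¬ ∃ (Estar : ℝ) (ν : Measure ℝ), ν ≠ 0 ∧ ν (Set.Iio 0) = 0 ∧
        ∀ β : ℝ, 0 < β →
          Integrable (fun lam : ℝ => Real.exp (-β*lam)) ν ∧
          (2 * ∫ k in (0:ℝ)..R, w k * Real.exp (-β*E₀) * Real.sinh (β * b k))
            = Real.exp (-β*Estar) * ∫ lam : ℝ, Real.exp (-β*lam) ∂ν := by
  rintro ⟨Estar, ν, hν0, hνIio, hβ⟩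
  -- bounds for w and b on [0,R]
  obtain ⟨Cw, hCw⟩ := (isCompact_Icc (a := (0:ℝ)) (b := R)).exists_bound_of_continuousOn hw
  obtain ⟨Cb, hCb⟩ := (isCompact_Icc (a := (0:ℝ)) (b := R)).exists_bound_of_continuousOn hb
  have hCw0 : 0 ≤ Cw := le_trans (norm_nonneg _) (hCw 0 ⟨le_refl _, hR.le⟩)
  have hCb0 : 0 ≤ Cb := le_trans (norm_nonneg _) (hCb 0 ⟨le_refl _, hR.le⟩)
  -- find n with ν (Icc 0 n) ≠ 0
  have hIci : ν (Set.Ici (0:ℝ)) ≠ 0 := by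
    intro h
    apply hν0
    rw [← Measure.measure_univ_eq_zero]
    have : (Set.univ : Set ℝ) ⊆ Set.Iio 0 ∪ Set.Ici 0 := by
      intro x _; rcases lt_or_ge x 0 with hx | hx
      · exact Or.inl hx
      · exact Or.inr hx
    have := (measure_mono (μ := ν) this).trans (measure_union_le _ _)
    simpa [hνIio, h] using this
  have hUnion : Set.Ici (0:ℝ) = ⋃ n : ℕ, Set.Icc (0:ℝ) n := by
    ext x
    simp only [Set.mem_Ici, Set.mem_iUnion, Set.mem_Icc]
    constructor
    · intro hx; exact ⟨⌈x⌉₊, hx, Nat.le_ceil x⟩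
    · rintro ⟨n, hx, _⟩; exact hx
  obtain ⟨n, hn⟩ : ∃ n : ℕ, ν (Set.Icc (0:ℝ) n) ≠ 0 := by
    by_contra h
    push_neg at h
    exact hIci (by rw [hUnion]; exact measure_iUnion_null h)
  -- finiteness of ν (Icc 0 n), from integrability at β = 1
  have hint1 : Integrable (fun lam : ℝ => Real.exp (-(1:ℝ)*lam)) ν := (hβ 1 one_pos).1
  have hfin : ν (Set.Icc (0:ℝ) n) < ⊤ := by
    have hsub : Set.Icc (0:ℝ) n ⊆ {a : ℝ | Real.exp (-(n:ℝ)) ≤ Real.exp (-(1:ℝ)*a)} := by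
      intro x hx
      simp only [Set.mem_setOf_eq]
      apply Real.exp_le_exp.mpr
      nlinarith [hx.2]
    exact lt_of_le_of_lt (measure_mono hsub)
      (hint1.measure_ge_lt_top (Real.exp_pos _))
  set c : ℝ := (ν (Set.Icc (0:ℝ) n)).toReal with hc
  have hcpos : 0 < c := ENNReal.toReal_pos hn hfin.ne
  -- lower bound for the trace side, for all β > 0
  have hlow : ∀ β : ℝ, 0 < β →
      Real.exp (-β*(n:ℝ)) * c ≤ ∫ lam : ℝ, Real.exp (-β*lam) ∂ν := by
    intro β hβpos
    have hintβ := (hβ β hβpos).1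
    have h1 : ∫ lam in Set.Icc (0:ℝ) n, Real.exp (-β*lam) ∂ν
        ≤ ∫ lam : ℝ, Real.exp (-β*lam) ∂ν :=
      setIntegral_le_integral hintβ
        (Filter.Eventually.of_forall fun x => (Real.exp_pos _).le)
    have h2 : ∫ lam in Set.Icc (0:ℝ) n, Real.exp (-β*(n:ℝ)) ∂ν
        ≤ ∫ lam in Set.Icc (0:ℝ) n, Real.exp (-β*lam) ∂ν := by
      apply setIntegral_mono_on
      · exact (integrableOn_const_iff enorm_ne_top).mpr (Or.inr hfin)
      · exact hintβ.integrableOn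
      · exact measurableSet_Icc
      · intro x hx
        apply Real.exp_le_exp.mpr
        nlinarith [hx.2]
    have h3 : ∫ lam in Set.Icc (0:ℝ) n, Real.exp (-β*(n:ℝ)) ∂ν
        = c * Real.exp (-β*(n:ℝ)) := by
      rw [setIntegral_const]; simp [hc, smul_eq_mul, measureReal_def]
    linarith [h1, h2, h3 ▸ h2]
  -- upper bound for the amplitude side, for all β > 0
  have hup : ∀ β : ℝ, 0 < β →
      (2 * ∫ k in (0:ℝ)..R, w k * Real.exp (-β*E₀) * Real.sinh (β * b k))
        ≤ 2 * (Cw * Real.exp (-β*E₀) * Real.sinh (β * Cb) * R) := by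
    intro β hβpos
    have hbound : ∀ x ∈ Set.uIoc (0:ℝ) R,
        ‖w x * Real.exp (-β*E₀) * Real.sinh (β * b x)‖
          ≤ Cw * Real.exp (-β*E₀) * Real.sinh (β * Cb) := by
      intro x hx
      have hxIcc : x ∈ Set.Icc (0:ℝ) R := by
        rw [Set.uIoc_of_le hR.le] at hx
        exact ⟨hx.1.le, hx.2⟩
      have hwx : |w x| ≤ Cw := hCw x hxIcc
      have hbx : |b x| ≤ Cb := hCb x hxIcc
      have hbx' : b x ≤ Cb := (le_abs_self _).trans hbx
      have hsinh : |Real.sinh (β * b x)| ≤ Real.sinh (β * Cb) := by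
        rw [abs_le]
        constructor
        · have : -(β * Cb) ≤ β * b x := by
            nlinarith [hb0 x hxIcc]
          calc -Real.sinh (β * Cb) = Real.sinh (-(β * Cb)) := (Real.sinh_neg _).symm
            _ ≤ Real.sinh (β * b x) := Real.sinh_le_sinh.mpr this
        · exact Real.sinh_le_sinh.mpr (by nlinarith)
      calc ‖w x * Real.exp (-β*E₀) * Real.sinh (β * b x)‖
          = |w x| * Real.exp (-β*E₀) * |Real.sinh (β * b x)| := by
            rw [Real.norm_eq_abs, abs_mul, abs_mul, abs_of_pos (Real.exp_pos _)]
        _ ≤ Cw * Real.exp (-β*E₀) * Real.sinh (β * Cb) := by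
            apply mul_le_mul
            · exact mul_le_mul_of_nonneg_right hwx (Real.exp_pos _).le
            · exact hsinh
            · exact abs_nonneg _
            · positivity
    have := intervalIntegral.norm_integral_le_of_norm_le_const hbound
    rw [sub_zero, abs_of_pos hR] at this
    have h4 : (∫ k in (0:ℝ)..R, w k * Real.exp (-β*E₀) * Real.sinh (β * b k))
        ≤ Cw * Real.exp (-β*E₀) * Real.sinh (β * Cb) * R := by
      calc (∫ k in (0:ℝ)..R, w k * Real.exp (-β*E₀) * Real.sinh (β * b k))
          ≤ ‖∫ k in (0:ℝ)..R, w k * Real.exp (-β*E₀) * Real.sinh (β * b k)‖ :=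
            le_abs_self _
        _ ≤ Cw * Real.exp (-β*E₀) * Real.sinh (β * Cb) * R := by simpa [sub_zero] using this
    linarith
  -- find small β where the upper bound is beaten by the lower bound
  have hcont : ContinuousAt (fun β : ℝ =>
      Real.exp (-β*Estar) * (Real.exp (-β*(n:ℝ)) * c)
        - 2 * (Cw * Real.exp (-β*E₀) * Real.sinh (β * Cb) * R)) 0 := by
    fun_prop
  have hval : Real.exp (-(0:ℝ)*Estar) * (Real.exp (-(0:ℝ)*(n:ℝ)) * c)
        - 2 * (Cw * Real.exp (-(0:ℝ)*E₀) * Real.sinh ((0:ℝ) * Cb) * R) = c := by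
    simp
  have hev : ∀ᶠ β in nhdsWithin (0:ℝ) (Set.Ioi 0),
      0 < Real.exp (-β*Estar) * (Real.exp (-β*(n:ℝ)) * c)
        - 2 * (Cw * Real.exp (-β*E₀) * Real.sinh (β * Cb) * R) := by
    have := hcont.tendsto
    rw [hval] at this
    have := this.mono_left (nhdsWithin_le_nhds (s := Set.Ioi (0:ℝ)))
    exact this.eventually (eventually_gt_nhds hcpos)
  have hmem : ∀ᶠ β in nhdsWithin (0:ℝ) (Set.Ioi 0), β ∈ Set.Ioi (0:ℝ) :=
    eventually_mem_nhdsWithin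
  obtain ⟨β, hβgt, hβmem⟩ := (hev.and hmem).exists
  have hβpos : (0:ℝ) < β := hβmem
  have heq := (hβ β hβpos).2
  have hlo := hlow β hβpos
  have hu := hup β hβpos
  have hrhs : Real.exp (-β*Estar) * (Real.exp (-β*(n:ℝ)) * c)
      ≤ Real.exp (-β*Estar) * ∫ lam : ℝ, Real.exp (-β*lam) ∂ν :=
    mul_le_mul_of_nonneg_left hlo (Real.exp_pos _).le
  rw [← heq] at hrhs
  linarith
end

section
/- Fix φr > 0 and ε > 0, set R = φr/ε and E±(k) = (φr ± √(φr² − ε²k²))/ε², and define the exact finite-cutoff JT disk amplitude Z(β) := ∫₀^R k·sinh(2πk)·(exp(−β·E₋(k)) − exp(−β·E₊(k))) dk for β > 0. Then (i) Z(β) → 0 as β → 0⁺, and (ii) there do not exist a real number E⋆ and a nonzero Borel measure ν on ℝ with ν((−∞,0)) = 0 such that for every β > 0 the function λ ↦ exp(−β·λ) is ν-integrable and Z(β) = exp(−β·E⋆)·∫ exp(−β·λ) dν(λ). -/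
open MeasureTheory Filter

/-- The exact finite-cutoff JT disk amplitude vanishes as `β → 0⁺` and is not
the ordinary thermal trace of any lower-bounded self-adjoint β-independent
Hamiltonian. -/
theorem jt_disk_not_thermal_trace (φr ε : ℝ) (hφ : 0 < φr) (hε : 0 < ε) :
    Tendsto (fun β : ℝ => ∫ k in (0:ℝ)..(φr/ε),
        k * Real.sinh (2*Real.pi*k) *
          (Real.exp (-β*((φr - Real.sqrt (φr^2 - ε^2*k^2))/ε^2)) -
           Real.exp (-β*((φr + Real.sqrt (φr^2 - ε^2*k^2))/ε^2))))
      (nhdsWithin 0 (Set.Ioi 0)) (nhds 0) ∧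
    ¬ ∃ (Estar : ℝ) (ν : Measure ℝ), ν ≠ 0 ∧ ν (Set.Iio 0) = 0 ∧
        ∀ β : ℝ, 0 < β →
          Integrable (fun lam : ℝ => Real.exp (-β*lam)) ν ∧
          (∫ k in (0:ℝ)..(φr/ε),
              k * Real.sinh (2*Real.pi*k) *
                (Real.exp (-β*((φr - Real.sqrt (φr^2 - ε^2*k^2))/ε^2)) -
                 Real.exp (-β*((φr + Real.sqrt (φr^2 - ε^2*k^2))/ε^2))))
            = Real.exp (-β*Estar) * ∫ lam : ℝ, Real.exp (-β*lam) ∂ν := by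
  have hRpos : (0:ℝ) < φr / ε := div_pos hφ hε
  -- Part (i): Z(β) → 0 as β → 0⁺
  have part1 : Tendsto (fun β : ℝ => ∫ k in (0:ℝ)..(φr/ε),
        k * Real.sinh (2*Real.pi*k) *
          (Real.exp (-β*((φr - Real.sqrt (φr^2 - ε^2*k^2))/ε^2)) -
           Real.exp (-β*((φr + Real.sqrt (φr^2 - ε^2*k^2))/ε^2))))
      (nhdsWithin 0 (Set.Ioi 0)) (nhds 0) := by
    have huIoc : Set.uIoc (0:ℝ) (φr/ε) = Set.Ioc 0 (φr/ε) := Set.uIoc_of_le hRpos.le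
    have h : Tendsto (fun β : ℝ => ∫ k in (0:ℝ)..(φr/ε),
        k * Real.sinh (2*Real.pi*k) *
          (Real.exp (-β*((φr - Real.sqrt (φr^2 - ε^2*k^2))/ε^2)) -
           Real.exp (-β*((φr + Real.sqrt (φr^2 - ε^2*k^2))/ε^2))))
      (nhdsWithin 0 (Set.Ioi 0)) (nhds (∫ _k in (0:ℝ)..(φr/ε), (0:ℝ))) := by
      apply intervalIntegral.tendsto_integral_filter_of_dominated_convergence
        (bound := fun k => k * Real.sinh (2*Real.pi*k))
      · exact Filter.Eventually.of_forall (fun β =>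
          (Continuous.aestronglyMeasurable (by fun_prop)))
      · refine Filter.eventually_of_mem self_mem_nhdsWithin (fun β hβ => ?_)
        have hβ' : (0:ℝ) < β := hβ
        rw [huIoc]
        refine Filter.Eventually.of_forall (fun k hk => ?_)
        obtain ⟨hk0, hkR⟩ := hk
        have hεk : ε * k ≤ φr := by
          have := (le_div_iff₀ hε).mp hkR
          linarith [mul_comm k ε]
        have hrad : (0:ℝ) ≤ φr^2 - ε^2*k^2 := by
          nlinarith [mul_nonneg (sub_nonneg.mpr hεk)
            (by positivity : (0:ℝ) ≤ φr + ε*k)]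
        have hs : Real.sqrt (φr^2 - ε^2*k^2) ≤ φr := by
          calc Real.sqrt (φr^2 - ε^2*k^2) ≤ Real.sqrt (φr^2) :=
                Real.sqrt_le_sqrt (by nlinarith)
            _ = φr := Real.sqrt_sq hφ.le
        have hs0 : (0:ℝ) ≤ Real.sqrt (φr^2 - ε^2*k^2) := Real.sqrt_nonneg _
        have hEm : (0:ℝ) ≤ (φr - Real.sqrt (φr^2 - ε^2*k^2))/ε^2 :=
          div_nonneg (by linarith) (sq_nonneg ε)
        have hEle : (φr - Real.sqrt (φr^2 - ε^2*k^2))/ε^2 ≤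
            (φr + Real.sqrt (φr^2 - ε^2*k^2))/ε^2 :=
          div_le_div_of_nonneg_right (by linarith) (by positivity)
        have hd0 : (0:ℝ) ≤ Real.exp (-β*((φr - Real.sqrt (φr^2 - ε^2*k^2))/ε^2)) -
            Real.exp (-β*((φr + Real.sqrt (φr^2 - ε^2*k^2))/ε^2)) := by
          have := Real.exp_le_exp.mpr (show -β*((φr + Real.sqrt (φr^2 - ε^2*k^2))/ε^2) ≤
              -β*((φr - Real.sqrt (φr^2 - ε^2*k^2))/ε^2) by nlinarith [hβ'.le])
          linarith
        have hd1 : Real.exp (-β*((φr - Real.sqrt (φr^2 - ε^2*k^2))/ε^2)) -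
            Real.exp (-β*((φr + Real.sqrt (φr^2 - ε^2*k^2))/ε^2)) ≤ 1 := by
          have h1 : Real.exp (-β*((φr - Real.sqrt (φr^2 - ε^2*k^2))/ε^2)) ≤ 1 :=
            Real.exp_le_one_iff.mpr (by nlinarith [hβ'.le])
          have h2 := Real.exp_pos (-β*((φr + Real.sqrt (φr^2 - ε^2*k^2))/ε^2))
          linarith
        have hks : (0:ℝ) ≤ k * Real.sinh (2*Real.pi*k) :=
          mul_nonneg hk0.le (Real.sinh_nonneg_iff.mpr (by positivity))
        rw [Real.norm_eq_abs, abs_of_nonneg (mul_nonneg hks hd0)]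
        calc k * Real.sinh (2*Real.pi*k) * _ ≤ k * Real.sinh (2*Real.pi*k) * 1 :=
              mul_le_mul_of_nonneg_left hd1 hks
          _ = k * Real.sinh (2*Real.pi*k) := mul_one _
      · exact (Continuous.intervalIntegrable (by fun_prop) 0 (φr/ε))
      · refine Filter.Eventually.of_forall (fun k _ => ?_)
        have hc : Continuous (fun β : ℝ => k * Real.sinh (2*Real.pi*k) *
            (Real.exp (-β*((φr - Real.sqrt (φr^2 - ε^2*k^2))/ε^2)) -
             Real.exp (-β*((φr + Real.sqrt (φr^2 - ε^2*k^2))/ε^2)))) := by fun_prop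
        have h0 := hc.tendsto 0
        simp only [neg_zero, zero_mul, Real.exp_zero, sub_self, mul_zero] at h0
        exact h0.mono_left nhdsWithin_le_nhds
    simpa using h
  refine ⟨part1, ?_⟩
  rintro ⟨Estar, ν, hν0, hνneg, hν⟩
  -- find n with ν (Icc 0 n) ≠ 0
  have hn : ∃ n : ℕ, ν (Set.Icc (0:ℝ) n) ≠ 0 := by
    by_contra h
    push_neg at h
    have hIci : ν (Set.Ici (0:ℝ)) = 0 := by
      have hsub : Set.Ici (0:ℝ) ⊆ ⋃ n : ℕ, Set.Icc (0:ℝ) n := by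
        intro x hx
        obtain ⟨n, hn⟩ := exists_nat_ge x
        exact Set.mem_iUnion.mpr ⟨n, hx, hn⟩
      refine le_antisymm ?_ zero_le
      calc ν (Set.Ici (0:ℝ)) ≤ ν (⋃ n : ℕ, Set.Icc (0:ℝ) n) := measure_mono hsub
        _ ≤ ∑' n : ℕ, ν (Set.Icc (0:ℝ) n) := measure_iUnion_le _
        _ = 0 := by simp [h]
    have huniv : ν Set.univ = 0 := by
      refine le_antisymm ?_ zero_le
      calc ν Set.univ ≤ ν (Set.Iio 0) + ν (Set.Ici 0) := by
            rw [← Set.Iio_union_Ici (a := (0:ℝ))]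
            exact measure_union_le _ _
        _ = 0 := by rw [hνneg, hIci]; simp
    exact hν0 (Measure.measure_univ_eq_zero.mp huniv)
  obtain ⟨n, hnne⟩ := hn
  -- ν (Icc 0 n) is finite
  have hint1 := (hν 1 one_pos).1
  have hfin : ν (Set.Icc (0:ℝ) n) < ⊤ := by
    refine lt_of_le_of_lt (measure_mono ?_) (hint1.measure_ge_lt_top (Real.exp_pos (-(n:ℝ))))
    intro x hx
    simp only [Set.mem_setOf_eq]
    exact Real.exp_le_exp.mpr (by simpa using neg_le_neg hx.2)
  set c : ℝ := (ν (Set.Icc (0:ℝ) n)).toReal with hc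
  have hcpos : 0 < c := ENNReal.toReal_pos hnne hfin.ne
  -- lower bound on RHS for each β > 0
  have hlow : ∀ β : ℝ, 0 < β →
      Real.exp (-β*Estar) * (Real.exp (-β*(n:ℝ)) * c) ≤
        ∫ k in (0:ℝ)..(φr/ε),
          k * Real.sinh (2*Real.pi*k) *
            (Real.exp (-β*((φr - Real.sqrt (φr^2 - ε^2*k^2))/ε^2)) -
             Real.exp (-β*((φr + Real.sqrt (φr^2 - ε^2*k^2))/ε^2))) := by
    intro β hβ
    obtain ⟨hInt, hEq⟩ := hν β hβ
    rw [hEq]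
    have h1 : Real.exp (-β*(n:ℝ)) * c ≤ ∫ lam in Set.Icc (0:ℝ) n, Real.exp (-β*lam) ∂ν := by
      refine setIntegral_ge_of_const_le_real measurableSet_Icc hfin.ne (fun x hx => ?_)
        hInt.integrableOn
      exact Real.exp_le_exp.mpr (by nlinarith [hx.2])
    have h2 : ∫ lam in Set.Icc (0:ℝ) n, Real.exp (-β*lam) ∂ν ≤ ∫ lam, Real.exp (-β*lam) ∂ν :=
      setIntegral_le_integral hInt (Filter.Eventually.of_forall fun x => (Real.exp_pos _).le)
    have := (Real.exp_pos (-β*Estar)).le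
    exact mul_le_mul_of_nonneg_left (h1.trans h2) this
  -- the lower bound tends to c > 0, contradiction with Z → 0
  have hg : Tendsto (fun β : ℝ => Real.exp (-β*Estar) * (Real.exp (-β*(n:ℝ)) * c))
      (nhdsWithin 0 (Set.Ioi 0)) (nhds c) := by
    have hc' : Continuous (fun β : ℝ => Real.exp (-β*Estar) * (Real.exp (-β*(n:ℝ)) * c)) := by
      fun_prop
    have h0 := hc'.tendsto 0
    simp only [neg_zero, zero_mul, Real.exp_zero, one_mul] at h0
    exact h0.mono_left nhdsWithin_le_nhds
  have hle : c ≤ 0 :=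
    le_of_tendsto_of_tendsto hg part1 (Filter.eventually_of_mem self_mem_nhdsWithin hlow)
  linarith
end

section
/- For all φr > 0 and β > 0, the exact finite-cutoff disk amplitude converges to the asymptotic Schwarzian disk amplitude in the infinite-cutoff limit: the function ε ↦ ∫₀^{φr/ε} k·sinh(2πk)·(exp(−β·E₋(k;ε)) − exp(−β·E₊(k;ε))) dk tends, as ε → 0⁺, to ∫₀^∞ k·sinh(2πk)·exp(−β·k²/(2φr)) dk (the latter improper integral being finite for every β > 0). -/
open Filter MeasureTheory

/-- The exact finite-cutoff disk amplitude converges, as `ε → 0⁺`, to the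
asymptotic Schwarzian disk amplitude, the latter being a finite improper
integral. -/
theorem disk_infinite_cutoff_limit (φr β : ℝ) (hφ : 0 < φr) (hβ : 0 < β) :
    IntegrableOn
      (fun k : ℝ => k * Real.sinh (2*Real.pi*k) * Real.exp (-(β*k^2/(2*φr))))
      (Set.Ioi 0) ∧
    Tendsto (fun ε : ℝ => ∫ k in (0:ℝ)..(φr/ε),
        k * Real.sinh (2*Real.pi*k) *
          (Real.exp (-β*((φr - Real.sqrt (φr^2 - ε^2*k^2))/ε^2)) -
           Real.exp (-β*((φr + Real.sqrt (φr^2 - ε^2*k^2))/ε^2))))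
      (nhdsWithin 0 (Set.Ioi 0))
      (nhds (∫ k in Set.Ioi (0:ℝ),
        k * Real.sinh (2*Real.pi*k) * Real.exp (-(β*k^2/(2*φr))))) := by
  have h2φ : (0:ℝ) < 2*φr := by linarith
  set c : ℝ := β / (2*φr) with hc_def
  have hc : 0 < c := div_pos hβ h2φ
  set g : ℝ → ℝ := fun k => k * Real.sinh (2*Real.pi*k) * Real.exp (-(β*k^2/(2*φr)))
    with hg_def
  have hexp_eq : ∀ k : ℝ, Real.exp (-(β*k^2/(2*φr))) = Real.exp (-c*k^2) := by
    intro k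
    congr 1
    rw [hc_def]; ring
  -- integrability of g on Ioi 0
  have hg_int : IntegrableOn g (Set.Ioi 0) := by
    set a : ℝ := Real.pi / c with ha_def
    have hH0 : Integrable (fun x : ℝ => x * Real.exp (-c*x^2) + a * Real.exp (-c*x^2)) :=
      (integrable_mul_exp_neg_mul_sq hc).add ((integrable_exp_neg_mul_sq hc).const_mul a)
    have hH1 : Integrable (fun k : ℝ =>
        (k-a) * Real.exp (-c*(k-a)^2) + a * Real.exp (-c*(k-a)^2)) := hH0.comp_sub_right a
    have hH2 : Integrable (fun k : ℝ => k * Real.exp (-c*(k-a)^2)) := by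
      refine hH1.congr (Filter.Eventually.of_forall fun k => ?_)
      ring
    have hH : Integrable (fun k : ℝ =>
        (Real.exp (Real.pi^2/c)/2) * (k * Real.exp (-c*(k-a)^2))) := hH2.const_mul _
    refine (hH.integrableOn).mono' ?_ ?_
    · exact (Continuous.aestronglyMeasurable (by fun_prop)).restrict
    · rw [ae_restrict_iff' measurableSet_Ioi]
      refine Filter.Eventually.of_forall fun k hk => ?_
      have hk0 : 0 < k := hk
      have hs : Real.sinh (2*Real.pi*k) ≤ Real.exp (2*Real.pi*k)/2 := by
        rw [Real.sinh_eq]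
        have := Real.exp_pos (-(2*Real.pi*k))
        linarith
      have hsnn : 0 ≤ Real.sinh (2*Real.pi*k) :=
        Real.sinh_nonneg_iff.mpr (by positivity)
      have hgnn : 0 ≤ g k := by
        rw [hg_def]
        have := Real.exp_pos (-(β*k^2/(2*φr)))
        positivity
      rw [Real.norm_eq_abs, abs_of_nonneg hgnn]
      have key : g k ≤ (Real.exp (Real.pi^2/c)/2) * (k * Real.exp (-c*(k-a)^2)) := by
        rw [hg_def]
        simp only
        rw [hexp_eq k]
        have h1 : k * Real.sinh (2*Real.pi*k) * Real.exp (-c*k^2)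
            ≤ k * (Real.exp (2*Real.pi*k)/2) * Real.exp (-c*k^2) :=
          mul_le_mul_of_nonneg_right (mul_le_mul_of_nonneg_left hs hk0.le)
            (Real.exp_pos _).le
        refine h1.trans (le_of_eq ?_)
        have hexpand : -c*(k-a)^2 = 2*Real.pi*k + (-c*k^2) - Real.pi^2/c := by
          rw [ha_def]
          field_simp
          ring
        rw [hexpand, Real.exp_sub, Real.exp_add]
        field_simp
      exact key
  refine ⟨hg_int, ?_⟩
  -- the finite-cutoff integrand
  set F : ℝ → ℝ → ℝ := fun ε k =>
    k * Real.sinh (2*Real.pi*k) *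
      (Real.exp (-β*((φr - Real.sqrt (φr^2 - ε^2*k^2))/ε^2)) -
       Real.exp (-β*((φr + Real.sqrt (φr^2 - ε^2*k^2))/ε^2))) with hF_def
  set G : ℝ → ℝ → ℝ := fun ε => Set.indicator (Set.Ioc 0 (φr/ε)) (F ε) with hG_def
  have hmem : ∀ᶠ ε in nhdsWithin (0:ℝ) (Set.Ioi 0), ε ∈ Set.Ioi (0:ℝ) :=
    eventually_mem_nhdsWithin
  -- rewrite the interval integral as an integral over Ioi 0 of the indicator
  have hEq : ∀ᶠ ε in nhdsWithin (0:ℝ) (Set.Ioi 0),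
      (∫ k in (0:ℝ)..(φr/ε), F ε k) = ∫ k in Set.Ioi (0:ℝ), G ε k := by
    filter_upwards [hmem] with ε hε
    have hb : (0:ℝ) ≤ φr/ε := le_of_lt (div_pos hφ hε)
    rw [intervalIntegral.integral_of_le hb, hG_def]
    rw [setIntegral_indicator measurableSet_Ioc]
    rw [Set.inter_eq_self_of_subset_right Set.Ioc_subset_Ioi_self]
  -- dominated convergence
  have hDCT : Tendsto (fun ε => ∫ k in Set.Ioi (0:ℝ), G ε k)
      (nhdsWithin 0 (Set.Ioi 0)) (nhds (∫ k in Set.Ioi (0:ℝ), g k)) := by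
    refine tendsto_integral_filter_of_dominated_convergence g ?_ ?_ hg_int ?_
    · filter_upwards [hmem] with ε hε
      refine AEStronglyMeasurable.indicator ?_ measurableSet_Ioc
      exact (Continuous.aestronglyMeasurable (by fun_prop)).restrict
    · filter_upwards [hmem] with ε hε
      rw [ae_restrict_iff' measurableSet_Ioi]
      refine Filter.Eventually.of_forall fun k hk => ?_
      have hk0 : 0 < k := hk
      have hsnn : 0 ≤ Real.sinh (2*Real.pi*k) := Real.sinh_nonneg_iff.mpr (by positivity)
      have hgnn : 0 ≤ g k := by
        rw [hg_def]; have := Real.exp_pos (-(β*k^2/(2*φr))); positivity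
      by_cases hmemk : k ∈ Set.Ioc 0 (φr/ε)
      · rw [hG_def]
        simp only [Set.indicator_of_mem hmemk]
        -- bound F ε k
        have hεp : (0:ℝ) < ε := hε
        have hkb : k * ε ≤ φr := (le_div_iff₀ hεp).mp hmemk.2
        have hε2 : (0:ℝ) < ε^2 := by positivity
        have harg : 0 ≤ φr^2 - ε^2*k^2 := by
          nlinarith [mul_le_mul hkb hkb (mul_nonneg hk0.le hεp.le) hφ.le]
        have hs0 : 0 ≤ Real.sqrt (φr^2 - ε^2*k^2) := Real.sqrt_nonneg _
        have hs2 : (Real.sqrt (φr^2 - ε^2*k^2))^2 = φr^2 - ε^2*k^2 := Real.sq_sqrt harg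
        set s := Real.sqrt (φr^2 - ε^2*k^2) with hs_def
        have hsφ : s ≤ φr := by nlinarith
        have hE1 : k^2/(2*φr) ≤ (φr - s)/ε^2 := by
          rw [div_le_div_iff₀ h2φ hε2]
          nlinarith
        have hA : Real.exp (-β*((φr - s)/ε^2)) ≤ Real.exp (-c*k^2) := by
          rw [Real.exp_le_exp, hc_def]
          have h1 : β*(k^2/(2*φr)) ≤ β*((φr-s)/ε^2) :=
            mul_le_mul_of_nonneg_left hE1 hβ.le
          have h2 : β/(2*φr)*k^2 = β*(k^2/(2*φr)) := by ring
          nlinarith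
        have hE2 : (φr - s)/ε^2 ≤ (φr + s)/ε^2 := by
          gcongr
          linarith
        have hdiff_nonneg : 0 ≤ Real.exp (-β*((φr - s)/ε^2)) -
            Real.exp (-β*((φr + s)/ε^2)) := by
          have h1 : β*((φr-s)/ε^2) ≤ β*((φr+s)/ε^2) :=
            mul_le_mul_of_nonneg_left hE2 hβ.le
          have := Real.exp_le_exp.mpr (by linarith :
            -β*((φr + s)/ε^2) ≤ -β*((φr - s)/ε^2))
          linarith
        have hdiff_le : Real.exp (-β*((φr - s)/ε^2)) -
            Real.exp (-β*((φr + s)/ε^2)) ≤ Real.exp (-c*k^2) := by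
          have := Real.exp_pos (-β*((φr + s)/ε^2))
          linarith
        have hFk : F ε k = k * Real.sinh (2*Real.pi*k) *
            (Real.exp (-β*((φr - s)/ε^2)) - Real.exp (-β*((φr + s)/ε^2))) := by
          rw [hF_def]
        have hFnn : 0 ≤ F ε k := by
          rw [hFk]
          exact mul_nonneg (mul_nonneg hk0.le hsnn) hdiff_nonneg
        rw [Real.norm_eq_abs, abs_of_nonneg hFnn, hFk, hg_def]
        simp only
        rw [hexp_eq k]
        exact mul_le_mul_of_nonneg_left hdiff_le (mul_nonneg hk0.le hsnn)
      · rw [hG_def]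
        simp only [Set.indicator_of_notMem hmemk]
        simpa using hgnn
    · rw [ae_restrict_iff' measurableSet_Ioi]
      refine Filter.Eventually.of_forall fun k hk => ?_
      have hk0 : 0 < k := hk
      have hsnn : 0 ≤ Real.sinh (2*Real.pi*k) := Real.sinh_nonneg_iff.mpr (by positivity)
      have hφk : 0 < φr/k := div_pos hφ hk0
      have hev : ∀ᶠ ε in nhdsWithin (0:ℝ) (Set.Ioi 0), ε ∈ Set.Ioo 0 (φr/k) :=
        eventually_mem_set.mpr (Ioo_mem_nhdsGT_of_mem ⟨le_refl 0, hφk⟩)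
      -- the square root tends to φr
      have hsqrt : Tendsto (fun ε : ℝ => Real.sqrt (φr^2 - ε^2*k^2))
          (nhdsWithin 0 (Set.Ioi 0)) (nhds φr) := by
        have hcont : Continuous fun ε : ℝ => Real.sqrt (φr^2 - ε^2*k^2) := by fun_prop
        have ht := (hcont.tendsto 0).mono_left
          (nhdsWithin_le_nhds : nhdsWithin (0:ℝ) (Set.Ioi 0) ≤ nhds 0)
        have h0 : Real.sqrt (φr^2 - (0:ℝ)^2*k^2) = φr := by
          norm_num [Real.sqrt_sq hφ.le]
        simpa [h0, Real.sqrt_sq hφ.le] using ht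
      -- the first exponential tends to exp(-(β k²/(2 φr)))
      have hA : Tendsto (fun ε : ℝ =>
          Real.exp (-β*((φr - Real.sqrt (φr^2 - ε^2*k^2))/ε^2)))
          (nhdsWithin 0 (Set.Ioi 0)) (nhds (Real.exp (-(β*k^2/(2*φr))))) := by
        have hden : Tendsto (fun ε : ℝ => φr + Real.sqrt (φr^2 - ε^2*k^2))
            (nhdsWithin 0 (Set.Ioi 0)) (nhds (φr + φr)) :=
          tendsto_const_nhds.add hsqrt
        have hq : Tendsto (fun ε : ℝ => -β*(k^2/(φr + Real.sqrt (φr^2 - ε^2*k^2))))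
            (nhdsWithin 0 (Set.Ioi 0)) (nhds (-β*(k^2/(φr + φr)))) :=
          (tendsto_const_nhds.div hden (by positivity)).const_mul _
        have h2 : Tendsto (fun ε : ℝ =>
            Real.exp (-β*(k^2/(φr + Real.sqrt (φr^2 - ε^2*k^2)))))
            (nhdsWithin 0 (Set.Ioi 0)) (nhds (Real.exp (-(β*k^2/(2*φr))))) := by
          have := (Real.continuous_exp.tendsto _).comp hq
          have heq : Real.exp (-β*(k^2/(φr + φr))) = Real.exp (-(β*k^2/(2*φr))) := by
            congr 1
            field_simp
            ring
          exact heq ▸ this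
        refine h2.congr' ?_
        filter_upwards [hev] with ε hε
        have hε0 : 0 < ε := hε.1
        have hε2 : (0:ℝ) < ε^2 := by positivity
        have hkb : ε * k < φr := (lt_div_iff₀ hk0).mp hε.2
        have harg : 0 ≤ φr^2 - ε^2*k^2 := by
          nlinarith [mul_le_mul hkb.le hkb.le (mul_nonneg hε0.le hk0.le) hφ.le]
        have hs0 : 0 ≤ Real.sqrt (φr^2 - ε^2*k^2) := Real.sqrt_nonneg _
        have hs2 : (Real.sqrt (φr^2 - ε^2*k^2))^2 = φr^2 - ε^2*k^2 := Real.sq_sqrt harg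
        have hkey : k^2/(φr + Real.sqrt (φr^2 - ε^2*k^2))
            = (φr - Real.sqrt (φr^2 - ε^2*k^2))/ε^2 := by
          rw [div_eq_div_iff (by positivity : φr + Real.sqrt (φr^2 - ε^2*k^2) ≠ 0) hε2.ne']
          linear_combination hs2
        rw [hkey]
      -- the second exponential tends to 0
      have hB : Tendsto (fun ε : ℝ =>
          Real.exp (-β*((φr + Real.sqrt (φr^2 - ε^2*k^2))/ε^2)))
          (nhdsWithin 0 (Set.Ioi 0)) (nhds 0) := by
        refine squeeze_zero' (g := fun ε : ℝ => Real.exp (-(β*φr*(ε^2)⁻¹)))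
          (Filter.Eventually.of_forall fun ε => (Real.exp_pos _).le) ?_ ?_
        · filter_upwards [hmem] with ε hε
          have hε0 : (0:ℝ) < ε := hε
          have hε2 : (0:ℝ) < ε^2 := by positivity
          have hs0 : 0 ≤ Real.sqrt (φr^2 - ε^2*k^2) := Real.sqrt_nonneg _
          have hinv : (0:ℝ) < (ε^2)⁻¹ := by positivity
          refine Real.exp_le_exp.mpr ?_
          rw [div_eq_mul_inv]
          nlinarith [mul_nonneg (mul_nonneg hβ.le hs0) hinv.le]
        · have h1 : Tendsto (fun ε : ℝ => ε^2) (nhdsWithin 0 (Set.Ioi 0))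
              (nhdsWithin 0 (Set.Ioi 0)) := by
            rw [tendsto_nhdsWithin_iff]
            constructor
            · have : Tendsto (fun ε : ℝ => ε^2) (nhds 0) (nhds ((0:ℝ)^2)) :=
                (continuous_pow 2).tendsto 0
              simpa using this.mono_left nhdsWithin_le_nhds
            · filter_upwards [hmem] with ε hε
              exact pow_pos (Set.mem_Ioi.mp hε) 2
          have h2 : Tendsto (fun ε : ℝ => (ε^2)⁻¹) (nhdsWithin 0 (Set.Ioi 0)) atTop :=
            tendsto_inv_nhdsGT_zero.comp h1
          have h3 : Tendsto (fun ε : ℝ => β*φr*(ε^2)⁻¹) (nhdsWithin 0 (Set.Ioi 0))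
              atTop := h2.const_mul_atTop (by positivity)
          exact Real.tendsto_exp_neg_atTop_nhds_zero.comp h3
      -- combine
      have hFk : Tendsto (fun ε : ℝ => F ε k) (nhdsWithin 0 (Set.Ioi 0))
          (nhds (g k)) := by
        have h := (tendsto_const_nhds (x := k * Real.sinh (2*Real.pi*k))
          (f := nhdsWithin (0:ℝ) (Set.Ioi 0))).mul (hA.sub hB)
        rw [sub_zero] at h
        exact h
      refine Filter.Tendsto.congr' ?_ hFk
      filter_upwards [hev] with ε hε
      have hkEle : k ≤ φr/ε := by
        rw [le_div_iff₀ hε.1]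
        nlinarith [(lt_div_iff₀ hk0).mp hε.2]
      have hkmem : k ∈ Set.Ioc 0 (φr/ε) := ⟨hk0, hkEle⟩
      rw [hG_def]
      exact (Set.indicator_of_mem hkmem _).symm
  exact hDCT.congr' (by filter_upwards [hEq] with ε h using h.symm)
end

section
/- Let R > 0 and let φ : ℝ → ℝ be continuous on [0, R]. Define ψ(b) := √(2/π)·∫₀^R φ(k)·cos(k·b) dk. Then the sample-space Parseval identity holds: ∫₀^∞ ψ(b)² db = (π/(2R))·ψ(0)² + (π/R)·Σ_{n=1}^∞ ψ(nπ/R)², where ψ² is integrable on (0, ∞) and the series on the right converges. -/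
open MeasureTheory Set AddCircle intervalIntegral ENNReal Complex


lemma sp_parseval_interval {T : ℝ} (hT : 0 < T) (a : ℝ) (g : ℝ → ℂ) (hg : Continuous g) :
    Summable (fun n : ℤ => ‖fourierCoeffOn (show a < a+T by linarith) g n‖ ^ 2) ∧
    ∑' n : ℤ, ‖fourierCoeffOn (show a < a+T by linarith) g n‖ ^ 2
      = (1/T) * ∫ x in a..(a+T), ‖g x‖ ^ 2 := by
  haveI : Fact (0 < T) := ⟨hT⟩
  set G : AddCircle T → ℂ := AddCircle.liftIoc T a g with hG
  have hGmeas : Measurable G := by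
    exact hg.measurable.comp (measurable_subtype_coe.comp (measurableEquivIoc T a).measurable)
  obtain ⟨C, hC⟩ : ∃ C, ∀ x ∈ Icc a (a+T), ‖g x‖ ≤ C :=
    isCompact_Icc.exists_bound_of_continuousOn hg.continuousOn
  have hGbd : ∀ z, ‖G z‖ ≤ C := by
    intro z
    have : (equivIoc T a z : ℝ) ∈ Ioc a (a+T) := (equivIoc T a z).2
    exact hC _ (Ioc_subset_Icc_self this)
  have hG2 : MemLp G 2 haarAddCircle :=
    (memLp_top_of_bound hGmeas.aestronglyMeasurable C (Filter.Eventually.of_forall hGbd)).mono_exponent le_top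
  set f : Lp ℂ 2 (@haarAddCircle T _) := hG2.toLp G with hf
  have hcoeff : ∀ n : ℤ, fourierCoeff (⇑f) n = fourierCoeffOn (show a < a+T by linarith) g n := by
    intro n
    rw [← fourierCoeff_liftIoc_eq]
    unfold fourierCoeff
    apply MeasureTheory.integral_congr_ae
    filter_upwards [hG2.coeFn_toLp] with z hz
    rw [hz]
  have hsum : Summable (fun n : ℤ => ‖fourierCoeff (⇑f) n‖ ^ 2) := by
    have h1 := (lp.memℓp (fourierBasis.repr f)).summable (by norm_num : 0 < (2:ℝ≥0∞).toReal)
    have : (fun i : ℤ => ‖fourierBasis.repr f i‖ ^ (2:ℝ≥0∞).toReal)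
        = fun i : ℤ => ‖fourierCoeff (⇑f) i‖ ^ 2 := by
      funext i
      rw [fourierBasis_repr, show ((2:ℝ≥0∞).toReal) = ((2:ℕ):ℝ) by norm_num,
        Real.rpow_natCast]
    rwa [this] at h1
  have hpar := tsum_sq_fourierCoeff f
  have hR : ∫ t : AddCircle T, ‖f t‖^2 ∂haarAddCircle = (1/T) * ∫ x in a..(a+T), ‖g x‖ ^ 2 := by
    have h1 : ∫ t : AddCircle T, ‖f t‖^2 ∂haarAddCircle = ∫ t : AddCircle T, ‖G t‖^2 ∂haarAddCircle := by
      apply MeasureTheory.integral_congr_ae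
      filter_upwards [hG2.coeFn_toLp] with z hz
      rw [hz]
    have h2 : ∫ x in a..(a+T), ‖g x‖ ^ 2 = ∫ x in a..(a+T), ‖G (x : AddCircle T)‖ ^ 2 := by
      rw [intervalIntegral.integral_of_le (by linarith : a ≤ a + T),
        intervalIntegral.integral_of_le (by linarith : a ≤ a + T)]
      apply setIntegral_congr_fun measurableSet_Ioc
      intro x hx
      simp only [hG, AddCircle.liftIoc_coe_apply hx]
    have h3 : ∫ x in a..(a+T), ‖G (x : AddCircle T)‖ ^ 2
        = ∫ z : AddCircle T, ‖G z‖^2 ∂(volume : Measure (AddCircle T)) :=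
      AddCircle.intervalIntegral_preimage T a (fun z => ‖G z‖^2)
    rw [h1, h2, h3, volume_eq_smul_haarAddCircle, MeasureTheory.integral_smul_measure,
      ENNReal.toReal_ofReal hT.le, smul_eq_mul]
    field_simp
  constructor
  · simpa only [hcoeff] using hsum
  · rw [← funext hcoeff, hpar, hR]

lemma sp_coeff (R : ℝ) (hR : 0 < R) (φe : ℝ → ℝ) (hφe : Continuous φe) (θ : ℝ) (n : ℤ) :
    fourierCoeffOn (show -R < -R + 2*R by linarith)
      (fun x : ℝ => (φe |x| : ℂ) * Complex.exp ((-(Real.pi*θ*x)/R : ℝ) * Complex.I)) n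
    = (((1/R) * ∫ k in (0:ℝ)..R, φe k * Real.cos (k*(((n:ℝ)+θ)*Real.pi/R)) : ℝ) : ℂ) := by
  set u : ℝ := ((n:ℝ)+θ)*Real.pi/R with hu
  rw [fourierCoeffOn_eq_integral]
  simp only [fourier_coe_apply, smul_eq_mul]
  rw [show -R + 2*R = R by ring]
  have hint : ∀ x : ℝ,
      Complex.exp (2 * ↑Real.pi * Complex.I * ↑(-n) * ↑x / ↑(R - -R))
        * ((φe |x| : ℂ) * Complex.exp ((-(Real.pi*θ*x)/R : ℝ) * Complex.I))
      = (φe |x| : ℂ) * Complex.exp ((-(x*u) : ℝ) * Complex.I) := by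
    intro x
    rw [mul_left_comm, ← Complex.exp_add]
    congr 2
    have hR2 : (R:ℂ) - -(R:ℂ) ≠ 0 := by
      simp only [sub_neg_eq_add]
      norm_cast
      positivity
    rw [hu]
    push_cast
    field_simp
    ring
  have h2 : (∫ x in -R..R,
      Complex.exp (2 * ↑Real.pi * Complex.I * ↑(-n) * ↑x / ↑(R - -R))
        * ((φe |x| : ℂ) * Complex.exp ((-(Real.pi*θ*x)/R : ℝ) * Complex.I)))
      = ∫ x in -R..R, (φe |x| : ℂ) * Complex.exp ((-(x*u) : ℝ) * Complex.I) := by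
    exact intervalIntegral.integral_congr (fun x _ => hint x)
  rw [h2]
  have hc : ∀ v : ℝ, Continuous fun x : ℝ =>
      (φe |x| : ℂ) * Complex.exp ((v*(x*u) : ℝ) * Complex.I) := by
    intro v
    apply Continuous.mul
    · exact Complex.continuous_ofReal.comp (hφe.comp continuous_abs)
    · exact Complex.continuous_exp.comp ((Complex.continuous_ofReal.comp (by continuity)).mul
        continuous_const)
  have hsplit : (∫ x in -R..R, (φe |x| : ℂ) * Complex.exp ((-(x*u) : ℝ) * Complex.I))
      = (∫ x in (0:ℝ)..R, (φe |x| : ℂ) * Complex.exp ((-(-x*u) : ℝ) * Complex.I))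
        + ∫ x in (0:ℝ)..R, (φe |x| : ℂ) * Complex.exp ((-(x*u) : ℝ) * Complex.I) := by
    have hneg : (∫ x in -R..(0:ℝ), (φe |x| : ℂ) * Complex.exp ((-(x*u) : ℝ) * Complex.I))
        = ∫ x in (0:ℝ)..R, (φe |(-x)| : ℂ) * Complex.exp ((-(-x*u) : ℝ) * Complex.I) := by
      rw [intervalIntegral.integral_comp_neg
        (fun x => (φe |x| : ℂ) * Complex.exp ((-(x*u) : ℝ) * Complex.I)), neg_zero]
    rw [← intervalIntegral.integral_add_adjacent_intervals (a := -R) (b := (0:ℝ)) (c := R)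
      ((hc (-1)).intervalIntegrable _ _ |>.congr ?_) ((hc (-1)).intervalIntegrable _ _ |>.congr ?_),
      hneg]
    · congr 1
      apply intervalIntegral.integral_congr
      intro x _
      simp only [abs_neg]
    all_goals
      intro x _
      simp only [neg_one_mul, one_mul, neg_mul, neg_neg]
  rw [hsplit]
  have hcos : (∫ x in (0:ℝ)..R, (φe |x| : ℂ) * Complex.exp ((-(-x*u) : ℝ) * Complex.I))
        + (∫ x in (0:ℝ)..R, (φe |x| : ℂ) * Complex.exp ((-(x*u) : ℝ) * Complex.I))
      = ∫ x in (0:ℝ)..R, ((φe x * Real.cos (x*u) * 2 : ℝ) : ℂ) := by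
    rw [← intervalIntegral.integral_add
      ((hc 1).intervalIntegrable _ _ |>.congr ?_) ((hc (-1)).intervalIntegrable _ _ |>.congr ?_)]
    · apply intervalIntegral.integral_congr
      intro x hx
      rw [uIcc_of_le hR.le] at hx
      have hax : |x| = x := abs_of_nonneg hx.1
      simp only [hax]
      push_cast
      rw [show -(-(x:ℂ) * (u:ℂ)) * Complex.I = ((x:ℂ)*(u:ℂ)) * Complex.I by ring,
          show -((x:ℂ) * (u:ℂ)) * Complex.I = -((x:ℂ)*(u:ℂ)) * Complex.I by ring,
          ← mul_add, ← Complex.two_cos]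
      ring
    all_goals
      intro x _
      simp only [neg_one_mul, one_mul, neg_mul, neg_neg]
  rw [hcos, intervalIntegral.integral_ofReal]
  rw [show ((1:ℝ) / (R - -R)) = 1/(2*R) by ring]
  rw [Complex.real_smul]
  push_cast
  have : (∫ x in (0:ℝ)..R, φe x * Real.cos (x*u) * 2)
      = 2 * ∫ k in (0:ℝ)..R, φe k * Real.cos (k*u) := by
    rw [← intervalIntegral.integral_const_mul]
    apply intervalIntegral.integral_congr
    intro x _; ring
  rw [this]
  push_cast
  have hRne : (R:ℂ) ≠ 0 := by norm_cast; positivity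
  field_simp
  ring_nf
  simp only [mul_comm u]

lemma sp_key (R : ℝ) (hR : 0 < R) (φe : ℝ → ℝ) (hφe : Continuous φe) (θ : ℝ) :
    HasSum (fun n : ℤ =>
      (Real.sqrt (2/Real.pi) * ∫ k in (0:ℝ)..R, φe k * Real.cos (k*(((n:ℝ)+θ)*Real.pi/R)))^2)
      ((2*R/Real.pi) * ∫ k in (0:ℝ)..R, (φe k)^2) := by
  set g : ℝ → ℂ := fun x : ℝ => (φe |x| : ℂ) * Complex.exp ((-(Real.pi*θ*x)/R : ℝ) * Complex.I)
    with hgdef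
  have hg : Continuous g := by
    apply Continuous.mul
    · exact Complex.continuous_ofReal.comp (hφe.comp _root_.continuous_abs)
    · exact Complex.continuous_exp.comp ((Complex.continuous_ofReal.comp (by continuity)).mul
        continuous_const)
  obtain ⟨hsum, htsum⟩ := sp_parseval_interval (show (0:ℝ) < 2*R by linarith) (-R) g hg
  set J : ℤ → ℝ := fun n => ∫ k in (0:ℝ)..R, φe k * Real.cos (k*(((n:ℝ)+θ)*Real.pi/R)) with hJ
  have hnorm : ∀ n : ℤ, ‖fourierCoeffOn (show -R < -R+2*R by linarith) g n‖ ^ 2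
      = (1/R)^2 * (J n)^2 := by
    intro n
    rw [sp_coeff R hR φe hφe θ n, Complex.norm_real, Real.norm_eq_abs, _root_.sq_abs, mul_pow]
  simp only [hnorm] at hsum htsum
  -- compute the RHS integral
  have hnormg : ∫ x in -R..(-R+2*R), ‖g x‖^2 = 2 * ∫ k in (0:ℝ)..R, (φe k)^2 := by
    rw [show -R+2*R = R by ring]
    have h1 : ∀ x : ℝ, ‖g x‖^2 = (φe |x|)^2 := by
      intro x
      rw [hgdef]
      simp only [norm_mul, Complex.norm_real,
        Complex.norm_exp_ofReal_mul_I, mul_one, Real.norm_eq_abs, _root_.sq_abs]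
    simp only [h1]
    have hcont : Continuous fun x : ℝ => (φe |x|)^2 :=
      ((hφe.comp _root_.continuous_abs).pow 2)
    rw [← intervalIntegral.integral_add_adjacent_intervals (a := -R) (b := (0:ℝ)) (c := R)
      (hcont.intervalIntegrable _ _) (hcont.intervalIntegrable _ _)]
    have hneg : (∫ x in -R..(0:ℝ), (φe |x|)^2) = ∫ x in (0:ℝ)..R, (φe |(-x)|)^2 := by
      rw [intervalIntegral.integral_comp_neg (fun x => (φe |x|)^2), neg_zero]
    have habs : (∫ x in (0:ℝ)..R, (φe |(-x)|)^2) = ∫ x in (0:ℝ)..R, (φe |x|)^2 :=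
      intervalIntegral.integral_congr (fun x _ => by rw [abs_neg])
    have hpos : (∫ x in (0:ℝ)..R, (φe |x|)^2) = ∫ k in (0:ℝ)..R, (φe k)^2 := by
      apply intervalIntegral.integral_congr
      intro x hx
      rw [uIcc_of_le hR.le] at hx
      simp only [_root_.abs_of_nonneg hx.1]
    rw [hneg, habs, hpos, two_mul]
  rw [hnormg] at htsum
  -- now massage
  have hR2 : (1/R)^2 ≠ 0 := by positivity
  have hRne : R ≠ 0 := ne_of_gt hR
  have hsum2 : Summable (fun n : ℤ => (J n)^2) := by
    have h := hsum.mul_left (R^2)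
    have he : (fun n : ℤ => R^2 * ((1/R)^2 * (J n)^2)) = fun n : ℤ => (J n)^2 := by
      funext n; field_simp
    rwa [he] at h
  have htsum2 : ∑' n : ℤ, (J n)^2 = R * ∫ k in (0:ℝ)..R, (φe k)^2 := by
    rw [tsum_mul_left] at htsum
    have h3 : ∑' n : ℤ, (J n)^2 = R^2 * ((1/R)^2 * ∑' n : ℤ, (J n)^2) := by
      field_simp
    rw [h3, htsum]
    field_simp
  have hhs : HasSum (fun n : ℤ => (J n)^2) (R * ∫ k in (0:ℝ)..R, (φe k)^2) :=
    htsum2 ▸ hsum2.hasSum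
  have hc2 : Real.sqrt (2/Real.pi)^2 = 2/Real.pi :=
    Real.sq_sqrt (by positivity : (0:ℝ) ≤ 2/Real.pi)
  have heq : (fun n : ℤ => (Real.sqrt (2/Real.pi) * J n)^2)
      = fun n : ℤ => (2/Real.pi) * (J n)^2 := by
    funext n; rw [mul_pow, hc2]
  rw [show (2*R/Real.pi) * ∫ k in (0:ℝ)..R, (φe k)^2
      = (2/Real.pi) * (R * ∫ k in (0:ℝ)..R, (φe k)^2) by ring]
  exact heq ▸ hhs.mul_left (2/Real.pi)


lemma sp_lintegral (R : ℝ) (hR : 0 < R) (ψ : ℝ → ℝ) (hψ : Continuous ψ)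
    (heven : ∀ b, ψ (-b) = ψ b) (A : ℝ) (hA : 0 ≤ A)
    (hkey : ∀ θ : ℝ, HasSum (fun n : ℤ => (ψ (((n:ℝ)+θ)*Real.pi/R))^2) A) :
    IntegrableOn (fun b : ℝ => (ψ b)^2) (Set.Ioi 0) ∧
    ∫ b in Set.Ioi (0:ℝ), (ψ b)^2 = (Real.pi/(2*R)) * A := by
  set h : ℝ := Real.pi/R with hhdef
  have hh : 0 < h := div_pos Real.pi_pos hR
  set Ψ : ℝ → ℝ≥0∞ := fun b => ENNReal.ofReal ((ψ b)^2) with hΨdef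
  have hΨm : Measurable Ψ := ((hψ.pow 2).measurable).ennreal_ofReal
  -- change of variables on each cell
  have hcell : ∀ n : ℤ, ∫⁻ x in Ioc ((n:ℝ)*h) (((n:ℝ)+1)*h), Ψ x
      = ENNReal.ofReal h * ∫⁻ θ in Ioc (0:ℝ) 1, Ψ (((n:ℝ)+θ)*h) := by
    intro n
    set e : ℝ → ℝ := fun θ => h*θ + (n:ℝ)*h with hedef
    have hem : Measurable e := (measurable_id.const_mul h).add_const _
    have hmap : Measure.map e volume = ENNReal.ofReal h⁻¹ • volume := by
      have h1 : Measure.map (fun θ : ℝ => h*θ) volume = ENNReal.ofReal |h⁻¹| • volume :=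
        Real.map_volume_mul_left (ne_of_gt hh)
      have h2 : e = (fun y => y + (n:ℝ)*h) ∘ (fun θ : ℝ => h*θ) := rfl
      rw [h2, ← Measure.map_map (measurable_add_const ((n:ℝ)*h))
        (show Measurable fun θ : ℝ => h * θ by fun_prop), h1,
        Measure.map_smul, map_add_right_eq_self volume ((n:ℝ)*h),
        abs_of_pos (inv_pos.mpr hh)]
    have hpre : e ⁻¹' (Ioc ((n:ℝ)*h) (((n:ℝ)+1)*h)) = Ioc (0:ℝ) 1 := by
      ext θ
      simp only [mem_preimage, mem_Ioc, hedef]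
      constructor
      · rintro ⟨h1, h2⟩
        constructor
        · nlinarith
        · nlinarith
      · rintro ⟨h1, h2⟩
        constructor
        · nlinarith
        · nlinarith
    have hsl := setLIntegral_map (μ := (volume : Measure ℝ)) (measurableSet_Ioc :
        MeasurableSet (Ioc ((n:ℝ)*h) (((n:ℝ)+1)*h))) hΨm hem
    rw [hmap, hpre] at hsl
    rw [Measure.restrict_smul, lintegral_smul_measure] at hsl
    have hee : ∀ θ : ℝ, Ψ (e θ) = Ψ (((n:ℝ)+θ)*h) := by
      intro θ; congr 1; rw [hedef]; ring
    simp only [hee] at hsl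
    rw [← hsl, smul_eq_mul, ← mul_assoc, ← ENNReal.ofReal_mul hh.le, mul_inv_cancel₀ (ne_of_gt hh),
      ENNReal.ofReal_one, one_mul]
  -- per θ sums
  have hsumθ : ∀ θ : ℝ, (∑' n : ℤ, Ψ (((n:ℝ)+θ)*h)) = ENNReal.ofReal A := by
    intro θ
    have h1 := (hkey θ).tsum_eq
    have h2 := ENNReal.ofReal_tsum_of_nonneg (fun n : ℤ => sq_nonneg _) (hkey θ).summable
    have h3 : ∀ n : ℤ, ((n:ℝ)+θ)*Real.pi/R = ((n:ℝ)+θ)*h := by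
      intro n; rw [hhdef]; ring
    simp only [h3] at h1 h2
    rw [← h2, h1]
  -- covering
  have hcover : (⋃ n : ℤ, Ioc ((n:ℝ)*h) (((n:ℝ)+1)*h)) = univ := by
    ext x
    simp only [mem_iUnion, mem_univ, iff_true, mem_Ioc]
    refine ⟨⌈x/h⌉ - 1, ?_, ?_⟩
    · push_cast
      have h1 : (⌈x/h⌉:ℝ) - 1 < x/h := by
        have := Int.ceil_lt_add_one (x/h); linarith
      calc ((⌈x/h⌉:ℝ)-1)*h < (x/h)*h := mul_lt_mul_of_pos_right h1 hh
        _ = x := div_mul_cancel₀ x (ne_of_gt hh)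
    · push_cast
      have h1 : x/h ≤ (⌈x/h⌉:ℝ) := Int.le_ceil _
      calc x = (x/h)*h := (div_mul_cancel₀ x (ne_of_gt hh)).symm
        _ ≤ ((⌈x/h⌉:ℝ)-1+1)*h := by
            apply mul_le_mul_of_nonneg_right _ hh.le
            linarith
  have hdisj : Pairwise (Function.onFun Disjoint
      (fun n : ℤ => Ioc ((n:ℝ)*h) (((n:ℝ)+1)*h))) := by
    intro m n hmn
    rcases lt_or_gt_of_ne hmn with hlt | hlt
    · apply Set.disjoint_left.mpr
      rintro x ⟨_, hx2⟩ ⟨hx3, _⟩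
      have : (m:ℝ) + 1 ≤ (n:ℝ) := by exact_mod_cast Int.lt_iff_add_one_le.mp hlt
      nlinarith
    · apply Set.disjoint_left.mpr
      rintro x ⟨hx1, _⟩ ⟨_, hx4⟩
      have : (n:ℝ) + 1 ≤ (m:ℝ) := by exact_mod_cast Int.lt_iff_add_one_le.mp hlt
      nlinarith
  -- total lintegral
  have htotal : ∫⁻ x, Ψ x = ENNReal.ofReal (h*A) := by
    calc ∫⁻ x, Ψ x = ∫⁻ x in ⋃ n : ℤ, Ioc ((n:ℝ)*h) (((n:ℝ)+1)*h), Ψ x := by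
          rw [hcover, setLIntegral_univ]
      _ = ∑' n : ℤ, ∫⁻ x in Ioc ((n:ℝ)*h) (((n:ℝ)+1)*h), Ψ x :=
          lintegral_iUnion (fun _ => measurableSet_Ioc) hdisj Ψ
      _ = ∑' n : ℤ, ENNReal.ofReal h * ∫⁻ θ in Ioc (0:ℝ) 1, Ψ (((n:ℝ)+θ)*h) := by
          simp only [hcell]
      _ = ENNReal.ofReal h * ∑' n : ℤ, ∫⁻ θ in Ioc (0:ℝ) 1, Ψ (((n:ℝ)+θ)*h) :=
          ENNReal.tsum_mul_left
      _ = ENNReal.ofReal h * ∫⁻ θ in Ioc (0:ℝ) 1, ∑' n : ℤ, Ψ (((n:ℝ)+θ)*h) := by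
          congr 1
          exact (lintegral_tsum (fun n : ℤ =>
            (hΨm.comp (show Measurable fun θ : ℝ => ((n:ℝ)+θ)*h by fun_prop)).aemeasurable)).symm
      _ = ENNReal.ofReal h * ∫⁻ _ in Ioc (0:ℝ) 1, ENNReal.ofReal A := by
          congr 1
          exact setLIntegral_congr_fun measurableSet_Ioc
            (fun θ _ => hsumθ θ)
      _ = ENNReal.ofReal (h*A) := by
          rw [setLIntegral_const, Real.volume_Ioc]
          norm_num
          rw [← ENNReal.ofReal_mul hh.le]
  -- reflection
  have hrefl : ∫⁻ x in Iio (0:ℝ), Ψ x = ∫⁻ x in Ioi (0:ℝ), Ψ x := by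
    have hmapneg : Measure.map (fun x : ℝ => -x) volume = volume :=
      Measure.map_neg_eq_self volume
    have := setLIntegral_map (μ := (volume : Measure ℝ)) (measurableSet_Iio : MeasurableSet (Iio (0:ℝ))) hΨm measurable_neg
    rw [hmapneg] at this
    rw [this]
    have hpre : (fun x : ℝ => -x) ⁻¹' (Iio 0) = Ioi 0 := by
      ext x; simp
    rw [hpre]
    apply setLIntegral_congr_fun measurableSet_Ioi
    intro x _
    rw [hΨdef]
    simp only [heven x]
  have hsplit : ∫⁻ x, Ψ x = (∫⁻ x in Iio (0:ℝ), Ψ x) + ∫⁻ x in Ioi (0:ℝ), Ψ x := by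
    have h1 : ∫⁻ x, Ψ x = ∫⁻ x in Iio (0:ℝ) ∪ Ioi (0:ℝ), Ψ x := by
      rw [Set.Iio_union_Ioi]
      rw [← setLIntegral_univ]
      apply setLIntegral_congr
      symm
      rw [ae_eq_univ]
      simp [compl_compl]
    have hdis : Disjoint (Iio (0:ℝ)) (Ioi 0) := by
      rw [Set.disjoint_left]
      intro x h1 h2
      simp only [mem_Iio] at h1
      simp only [mem_Ioi] at h2
      linarith
    rw [h1, lintegral_union measurableSet_Ioi hdis]
  have hIoi : ∫⁻ x in Ioi (0:ℝ), Ψ x = ENNReal.ofReal (h*A) / 2 := by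
    have h2 : ENNReal.ofReal (h*A) = 2 * ∫⁻ x in Ioi (0:ℝ), Ψ x := by
      rw [← htotal, hsplit, hrefl, two_mul]
    rw [h2, mul_comm, div_eq_mul_inv, mul_assoc,
      ENNReal.mul_inv_cancel (by norm_num) (by norm_num), mul_one]
  have hfin : ∫⁻ x in Ioi (0:ℝ), Ψ x < ⊤ := by
    rw [hIoi]
    exact ENNReal.div_lt_top ENNReal.ofReal_ne_top (by norm_num)
  have hint : IntegrableOn (fun b : ℝ => (ψ b)^2) (Set.Ioi 0) := by
    constructor
    · exact (hψ.pow 2).aestronglyMeasurable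
    · rw [hasFiniteIntegral_iff_ofReal (Filter.Eventually.of_forall (fun x => sq_nonneg _))]
      exact hfin
  refine ⟨hint, ?_⟩
  rw [integral_eq_lintegral_of_nonneg_ae (Filter.Eventually.of_forall (fun x => sq_nonneg _))
    (hψ.pow 2).aestronglyMeasurable]
  rw [hIoi, ENNReal.toReal_div, ENNReal.toReal_ofReal (by positivity)]
  rw [hhdef]
  norm_num
  ring


/-- Sample-space Parseval identity for the bandlimited geodesic sector:
the `L²(0,∞)`-norm of an `R`-bandlimited (cosine-sense) function is given by
its weighted Nyquist samples. -/
theorem sampled_parseval (R : ℝ) (hR : 0 < R) (φ : ℝ → ℝ)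
    (hφ : ContinuousOn φ (Set.Icc 0 R)) :
    IntegrableOn
      (fun b : ℝ => (Real.sqrt (2/Real.pi) * ∫ k in (0:ℝ)..R, φ k * Real.cos (k*b))^2)
      (Set.Ioi 0) ∧
    Summable (fun n : ℕ =>
      (Real.sqrt (2/Real.pi)
        * ∫ k in (0:ℝ)..R, φ k * Real.cos (k*(((n:ℝ)+1)*Real.pi/R)))^2) ∧
    (∫ b in Set.Ioi (0:ℝ),
        (Real.sqrt (2/Real.pi) * ∫ k in (0:ℝ)..R, φ k * Real.cos (k*b))^2)
      = (Real.pi/(2*R)) *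
          (Real.sqrt (2/Real.pi) * ∫ k in (0:ℝ)..R, φ k * Real.cos (k*0))^2
        + (Real.pi/R) * ∑' n : ℕ,
            (Real.sqrt (2/Real.pi)
              * ∫ k in (0:ℝ)..R, φ k * Real.cos (k*(((n:ℝ)+1)*Real.pi/R)))^2 := by
  -- continuous extension of φ
  set φe : ℝ → ℝ := Set.IccExtend hR.le ((Set.Icc (0:ℝ) R).restrict φ) with hφedef
  have hφe : Continuous φe :=
    (continuousOn_iff_continuous_restrict.mp hφ).comp continuous_projIcc
  have hφeeq : ∀ k ∈ Set.Icc (0:ℝ) R, φe k = φ k := by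
    intro k hk
    rw [hφedef, Set.IccExtend_of_mem hR.le _ hk]
    rfl
  have hsame : ∀ b : ℝ, (∫ k in (0:ℝ)..R, φ k * Real.cos (k*b))
      = ∫ k in (0:ℝ)..R, φe k * Real.cos (k*b) := by
    intro b
    apply intervalIntegral.integral_congr
    intro k hk
    rw [uIcc_of_le hR.le] at hk
    simp only [hφeeq k hk]
  set ψ : ℝ → ℝ := fun b => Real.sqrt (2/Real.pi) * ∫ k in (0:ℝ)..R, φe k * Real.cos (k*b)
    with hψdef
  have hψ : Continuous ψ := by
    apply continuous_const.mul
    exact intervalIntegral.continuous_parametric_intervalIntegral_of_continuous'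
      (by fun_prop : Continuous (Function.uncurry fun b t => φe t * Real.cos (t*b))) 0 R
  have heven : ∀ b, ψ (-b) = ψ b := by
    intro b
    simp only [hψdef, mul_neg, Real.cos_neg]
  set A : ℝ := (2*R/Real.pi) * ∫ k in (0:ℝ)..R, (φe k)^2 with hAdef
  have hA : 0 ≤ A := by
    apply mul_nonneg
    · positivity
    · exact intervalIntegral.integral_nonneg hR.le (fun k _ => sq_nonneg _)
  have hkey : ∀ θ : ℝ, HasSum (fun n : ℤ => (ψ (((n:ℝ)+θ)*Real.pi/R))^2) A :=
    fun θ => sp_key R hR φe hφe θ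
  obtain ⟨hint, hval⟩ := sp_lintegral R hR ψ hψ heven A hA hkey
  -- θ = 0 sum
  set F : ℤ → ℝ := fun n => (ψ ((n:ℝ)*Real.pi/R))^2 with hFdef
  have hkey0 : HasSum F A := by
    have := hkey 0
    simpa only [add_zero] using this
  have hFeven : ∀ n : ℤ, F (-n) = F n := by
    intro n
    simp only [hFdef, Int.cast_neg]
    rw [show -(n:ℝ)*Real.pi/R = -((n:ℝ)*Real.pi/R) by ring, heven]
  have h3 : HasSum (fun n : ℕ => 2 * F n) (A + F 0) := by
    have h1 := hkey0.nat_add_neg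
    have h2 : (fun n : ℕ => F n + F (-n)) = fun n : ℕ => 2 * F n := by
      funext n
      rw [hFeven]
      ring
    rwa [h2] at h1
  have h4 : HasSum (fun n : ℕ => 2 * F (((n+1 : ℕ) : ℤ))) (A - F 0) := by
    refine (hasSum_nat_add_iff (f := fun n : ℕ => 2 * F (n:ℤ)) 1).mpr ?_
    rw [Finset.sum_range_one]
    convert h3 using 1
    push_cast
    · rfl
    · rw [Nat.cast_zero]
      ring
  have h5 : HasSum (fun n : ℕ => F ((n:ℤ)+1)) ((A - F 0)/2) := by
    have := h4.div_const 2
    convert this using 2 with n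
    push_cast
    · rfl
    · rw [Nat.cast_add, Nat.cast_one]
      ring
  -- match with the statement's expressions
  have hterm : ∀ n : ℕ, (Real.sqrt (2/Real.pi)
      * ∫ k in (0:ℝ)..R, φ k * Real.cos (k*(((n:ℝ)+1)*Real.pi/R)))^2 = F ((n:ℤ)+1) := by
    intro n
    rw [hsame]
    simp only [hFdef, hψdef]
    push_cast
    ring_nf
    congr 3
    funext k
    ring_nf
  have hintg : (fun b : ℝ => (Real.sqrt (2/Real.pi)
      * ∫ k in (0:ℝ)..R, φ k * Real.cos (k*b))^2) = fun b : ℝ => (ψ b)^2 := by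
    funext b
    rw [hsame]
  have hzero : (Real.sqrt (2/Real.pi) * ∫ k in (0:ℝ)..R, φ k * Real.cos (k*0))^2 = F 0 := by
    rw [hsame]
    simp only [hFdef, hψdef]
    norm_num
  refine ⟨?_, ?_, ?_⟩
  · rw [hintg]; exact hint
  · simp only [hterm]; exact h5.summable
  · rw [hintg, hval, hzero]
    have : ∑' n : ℕ, (Real.sqrt (2/Real.pi)
        * ∫ k in (0:ℝ)..R, φ k * Real.cos (k*(((n:ℝ)+1)*Real.pi/R)))^2 = (A - F 0)/2 := by
      simp only [hterm]
      exact h5.tsum_eq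
    rw [this]
    field_simp
    ring
end

section
/- Let R > 0 and let φ : ℝ → ℝ be continuous on [0, R]. Define ψ(b) := √(2/π)·∫₀^R φ(k)·cos(k·b) dk. Then for every real b ≥ 0, the Shannon interpolation series converges and reconstructs ψ exactly: ψ(b) = ψ(0)·sinc(R·b/π) + Σ_{n=1}^∞ ψ(nπ/R)·(sinc(R·b/π − n) + sinc(R·b/π + n)). -/
/-- The normalized sinc function: `sinc u = sin(πu)/(πu)` for `u ≠ 0`, `sinc 0 = 1`. -/
noncomputable def sinc (u : ℝ) : ℝ :=
  if u = 0 then 1 else Real.sin (Real.pi * u) / (Real.pi * u)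

open Real hiding sinc sinc_zero sinc_neg
open MeasureTheory

lemma sinc_zero : sinc 0 = 1 := if_pos rfl

lemma sinc_of_ne {u : ℝ} (h : u ≠ 0) : sinc u = Real.sin (Real.pi * u) / (Real.pi * u) :=
  if_neg h

lemma sinc_neg (u : ℝ) : sinc (-u) = sinc u := by
  rcases eq_or_ne u 0 with rfl | h
  · norm_num
  · rw [sinc_of_ne (neg_ne_zero.2 h), sinc_of_ne h, mul_neg, Real.sin_neg, neg_div_neg_eq]

lemma integral_exp_I (R : ℝ) (hR : 0 < R) (γ : ℝ) :
    ∫ x in (-R)..R, Complex.exp ((γ * x : ℝ) * Complex.I)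
      = ((2 * R * sinc (γ * R / Real.pi) : ℝ) : ℂ) := by
  rcases eq_or_ne γ 0 with rfl | hγ
  · simp [sinc_zero]
    ring
  · have hγR : γ * R ≠ 0 := mul_ne_zero hγ hR.ne'
    have hc : (γ : ℂ) * Complex.I ≠ 0 := by
      simp [Complex.I_ne_zero, Complex.ofReal_ne_zero.2 hγ]
    have h0 : ∀ x : ℝ, ((γ * x : ℝ) : ℂ) * Complex.I = (γ * Complex.I) * x := by
      intro x; push_cast; ring
    simp_rw [h0]
    rw [integral_exp_mul_complex hc]
    have e1 : (γ : ℂ) * Complex.I * (R : ℂ) = ((γ * R : ℝ) : ℂ) * Complex.I := by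
      push_cast; ring
    have e2 : (γ : ℂ) * Complex.I * ((-R : ℝ) : ℂ) = ((-(γ * R) : ℝ) : ℂ) * Complex.I := by
      push_cast; ring
    rw [e1, e2, Complex.exp_mul_I, Complex.exp_mul_I]
    have hsinc : 2 * R * sinc (γ * R / Real.pi) = 2 * Real.sin (γ * R) / γ := by
      rw [sinc_of_ne (div_ne_zero hγR Real.pi_ne_zero)]
      have h3 : Real.pi * (γ * R / Real.pi) = γ * R := by field_simp
      rw [h3]
      field_simp
    rw [hsinc]
    push_cast
    simp only [Complex.cos_neg, Complex.sin_neg]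
    field_simp [Complex.ofReal_ne_zero.2 hγ, Complex.I_ne_zero]
    ring

/-- The key Fourier-coefficient integral. -/
lemma fourier_cos_integral (R b : ℝ) (hR : 0 < R) (n : ℤ) :
    (∫ x in (-R)..R, (fourier (-n) (x : AddCircle (2*R))) * ((Real.cos (x*b) : ℝ) : ℂ))
      = ((R * (sinc (R*b/Real.pi - n) + sinc (R*b/Real.pi + n)) : ℝ) : ℂ) := by
  have hπ := Real.pi_ne_zero
  have expand : ∀ x : ℝ, (fourier (-n) (x : AddCircle (2*R))) * ((Real.cos (x*b) : ℝ) : ℂ)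
      = (Complex.exp (((b - (n:ℝ)*Real.pi/R)*x : ℝ)*Complex.I)
          + Complex.exp ((((-b) - (n:ℝ)*Real.pi/R)*x : ℝ)*Complex.I))/2 := by
    intro x
    rw [fourier_coe_apply]
    have h1 : (2*(Real.pi:ℂ)*Complex.I*((-n : ℤ):ℂ)*(x:ℂ)/((2*R:ℝ):ℂ))
        = ((-((n:ℝ)*Real.pi/R)*x : ℝ):ℂ)*Complex.I := by
      push_cast
      field_simp
    rw [h1]
    have h2 : ((Real.cos (x*b) : ℝ) : ℂ)
        = (Complex.exp (((x*b : ℝ):ℂ)*Complex.I) + Complex.exp (((-(x*b) : ℝ):ℂ)*Complex.I))/2 := by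
      rw [Complex.exp_mul_I, Complex.exp_mul_I]
      push_cast
      simp [Complex.cos_neg, Complex.sin_neg]
      ring
    rw [h2, ← mul_div_assoc, mul_add, ← Complex.exp_add, ← Complex.exp_add]
    congr 3 <;> push_cast <;> ring
  simp_rw [expand]
  rw [intervalIntegral.integral_div]
  have hInt : ∀ γ : ℝ, IntervalIntegrable (fun x : ℝ => Complex.exp ((γ*x : ℝ)*Complex.I))
      MeasureTheory.volume (-R) R := by
    intro γ
    apply Continuous.intervalIntegrable
    exact Complex.continuous_exp.comp (by continuity)
  rw [intervalIntegral.integral_add (hInt _) (hInt _), integral_exp_I R hR _, integral_exp_I R hR _]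
  have k1 : (b - (n:ℝ)*Real.pi/R) * R / Real.pi = R*b/Real.pi - n := by
    field_simp
  have k2 : ((-b) - (n:ℝ)*Real.pi/R) * R / Real.pi = -(R*b/Real.pi + n) := by
    field_simp
    ring
  rw [k1, k2, sinc_neg]
  push_cast
  ring

lemma summable_A (u : ℝ) (hu : 0 ≤ u) :
    Summable (fun n : ℕ => |sinc (u - n) + sinc (u + n)|) := by
  have hπ := Real.pi_pos
  have key : ∀ n : ℕ, u < n → |sinc (u - n) + sinc (u + n)|
      ≤ 2*u/(Real.pi*((n:ℝ)^2 - u^2)) := by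
    intro n hn
    have hn0 : (0:ℝ) < n := lt_of_le_of_lt hu hn
    have h1 : u - (n:ℝ) ≠ 0 := ne_of_lt (by linarith)
    have h2 : u + (n:ℝ) ≠ 0 := ne_of_gt (by linarith)
    have hd : Real.pi*(u^2-(n:ℝ)^2) < 0 :=
      mul_neg_of_pos_of_neg hπ (by nlinarith)
    rw [sinc_of_ne h1, sinc_of_ne h2]
    have hs : Real.sin (Real.pi*(u + n)) = Real.sin (Real.pi*(u - n)) := by
      have h3 : Real.pi*(u+n) = Real.pi*(u-n) + n*(2*Real.pi) := by ring
      rw [h3, Real.sin_add_nat_mul_two_pi]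
    rw [hs]
    have hne : u^2 - (n:ℝ)^2 ≠ 0 := by nlinarith
    have heq : Real.sin (Real.pi*(u-n))/(Real.pi*(u-n)) + Real.sin (Real.pi*(u-n))/(Real.pi*(u+n))
        = Real.sin (Real.pi*(u-n)) * (2*u/(Real.pi*(u^2 - (n:ℝ)^2))) := by
      field_simp [h1, h2, hne]
      ring
    rw [heq, abs_mul]
    have hb1 : |2*u/(Real.pi*(u^2-(n:ℝ)^2))| = 2*u/(Real.pi*((n:ℝ)^2-u^2)) := by
      rw [abs_div, abs_of_nonneg (by linarith : (0:ℝ) ≤ 2*u), abs_of_neg hd]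
      congr 1
      ring
    rw [hb1]
    have hsin : |Real.sin (Real.pi*(u-n))| ≤ 1 := abs_le.mpr ⟨Real.neg_one_le_sin _, Real.sin_le_one _⟩
    have hpos : 0 ≤ 2*u/(Real.pi*((n:ℝ)^2-u^2)) := by
      apply div_nonneg (by linarith)
      have : 0 < (n:ℝ)^2 - u^2 := by nlinarith
      positivity
    calc |Real.sin (Real.pi*(u-n))| * (2*u/(Real.pi*((n:ℝ)^2-u^2)))
        ≤ 1 * (2*u/(Real.pi*((n:ℝ)^2-u^2))) := mul_le_mul_of_nonneg_right hsin hpos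
      _ = 2*u/(Real.pi*((n:ℝ)^2-u^2)) := one_mul _
  apply Summable.of_norm_bounded_eventually (g := fun n : ℕ => 4*u * (1/(n:ℝ)^2))
  · exact (summable_one_div_nat_pow.mpr one_lt_two).mul_left _
  · rw [Nat.cofinite_eq_atTop]
    filter_upwards [Filter.eventually_ge_atTop (⌈2*u⌉₊ + 1)] with n hn
    have h2u : (2*u) ≤ (⌈2*u⌉₊:ℝ) := Nat.le_ceil _
    have hcast : ((⌈2*u⌉₊ + 1 : ℕ):ℝ) ≤ (n:ℝ) := Nat.cast_le.mpr hn
    push_cast at hcast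
    have hn' : 2*u + 1 ≤ (n:ℝ) := by linarith
    have hun : u < (n:ℝ) := by linarith
    have hn0 : (0:ℝ) < (n:ℝ) := by linarith
    have hn2 : (0:ℝ) < (n:ℝ)^2 := by positivity
    rw [Real.norm_eq_abs, abs_abs]
    refine (key n hun).trans ?_
    have hu2 : u^2 ≤ (n:ℝ)^2/4 := by nlinarith
    have hden : (n:ℝ)^2/2 ≤ Real.pi*((n:ℝ)^2 - u^2) := by
      nlinarith [Real.pi_gt_three, hn2]
    calc 2*u/(Real.pi*((n:ℝ)^2-u^2)) ≤ 2*u/((n:ℝ)^2/2) :=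
          div_le_div_of_nonneg_left (by linarith) (by positivity) hden
      _ = 4*u*(1/(n:ℝ)^2) := by field_simp; ring

/-- Shannon reconstruction on the finite-cutoff geodesic sector: an
`R`-bandlimited (cosine-sense) function `ψ` is exactly reconstructed, at every
`b ≥ 0`, from its Nyquist samples `ψ(nπ/R)`; the interpolation series (indexed
by `n ≥ 1`, written as `n+1` over `ℕ`) converges to `ψ(b) − ψ(0)·sinc(Rb/π)`. -/
theorem shannon_reconstruction (R : ℝ) (hR : 0 < R) (φ : ℝ → ℝ)
    (hφ : ContinuousOn φ (Set.Icc 0 R)) (b : ℝ) (hb : 0 ≤ b) :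
    HasSum
      (fun n : ℕ =>
        (Real.sqrt (2/Real.pi)
            * ∫ k in (0:ℝ)..R, φ k * Real.cos (k*(((n:ℝ)+1)*Real.pi/R)))
          * (sinc (R*b/Real.pi - ((n:ℝ)+1)) + sinc (R*b/Real.pi + ((n:ℝ)+1))))
      ((Real.sqrt (2/Real.pi) * ∫ k in (0:ℝ)..R, φ k * Real.cos (k*b))
        - (Real.sqrt (2/Real.pi) * ∫ k in (0:ℝ)..R, φ k * Real.cos (k*0))
            * sinc (R*b/Real.pi)) := by
  have hπ := Real.pi_pos
  haveI : Fact (0 < 2*R) := ⟨by linarith⟩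
  set u := R*b/Real.pi with hu_def
  have hu : 0 ≤ u := by positivity
  set f₀ : ℝ → ℂ := fun x => ((Real.cos (x*b) : ℝ) : ℂ) with hf₀
  have hper : f₀ (-R) = f₀ (-R + 2*R) := by
    have h : Real.cos ((-R)*b) = Real.cos ((-R+2*R)*b) := by
      rw [show (-R)*b = -(R*b) by ring, Real.cos_neg, show (-R+2*R)*b = R*b by ring]
    simp only [hf₀, h]
  have hcont : ContinuousOn f₀ (Set.Icc (-R) (-R + 2*R)) :=
    Continuous.continuousOn (by continuity)
  set G : C(AddCircle (2*R), ℂ) :=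
    ⟨AddCircle.liftIco (2*R) (-R) f₀, AddCircle.liftIco_continuous hper hcont⟩ with hG_def
  -- Fourier coefficients of G
  have coeff : ∀ n : ℤ, fourierCoeff (⇑G) n = (((sinc (u - n) + sinc (u + n))/2 : ℝ) : ℂ) := by
    intro n
    rw [fourierCoeff_eq_intervalIntegral (⇑G) n (-R)]
    rw [show -R + 2*R = R by ring]
    have hcongr : (∫ x in (-R)..R, fourier (-n) (x : AddCircle (2*R)) • (⇑G) (x : AddCircle (2*R)))
        = ∫ x in (-R)..R, (fourier (-n) (x : AddCircle (2*R))) * ((Real.cos (x*b) : ℝ) : ℂ) := by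
      rw [intervalIntegral.integral_of_le (by linarith : (-R) ≤ R),
          intervalIntegral.integral_of_le (by linarith : (-R) ≤ R),
          MeasureTheory.integral_Ioc_eq_integral_Ioo, MeasureTheory.integral_Ioc_eq_integral_Ioo]
      refine MeasureTheory.setIntegral_congr_fun measurableSet_Ioo (fun x hx => ?_)
      have hxIco : x ∈ Set.Ico (-R) (-R + 2*R) := ⟨hx.1.le, by linarith [hx.2]⟩
      show fourier (-n) (x : AddCircle (2*R))
          • (AddCircle.liftIco (2*R) (-R) f₀) (x : AddCircle (2*R)) = _
      rw [AddCircle.liftIco_coe_apply hxIco, smul_eq_mul]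
    rw [hcongr, fourier_cos_integral R b hR n]
    rw [show ((1:ℝ)/(2*R)) • (((R * (sinc (R*b/Real.pi - n) + sinc (R*b/Real.pi + n)) : ℝ) : ℂ))
        = ((((1:ℝ)/(2*R)) * (R * (sinc (R*b/Real.pi - n) + sinc (R*b/Real.pi + n))) : ℝ) : ℂ) from by
      rw [Complex.real_smul]; push_cast; ring]
    norm_cast
    rw [← hu_def]
    field_simp
  -- summability of the coefficients
  have baseAbs : Summable (fun n : ℕ => |sinc (u - n) + sinc (u + n)|) := summable_A u hu
  have base : Summable (fun n : ℕ => sinc (u - n) + sinc (u + n)) := summable_abs_iff.mp baseAbs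
  have scoeff : Summable (fourierCoeff (⇑G)) := by
    apply Summable.of_nat_of_neg
    · refine Summable.congr ((Complex.summable_ofReal).mpr (base.div_const 2)) (fun n => ?_)
      rw [coeff]
      push_cast
      norm_num
    · refine Summable.congr ((Complex.summable_ofReal).mpr (base.div_const 2)) (fun n => ?_)
      rw [coeff]
      push_cast
      ring
  -- pointwise convergence of the cosine series
  have point : ∀ k : ℝ, k ∈ Set.Ioo (0:ℝ) R →
      HasSum (fun n : ℕ => (sinc (u - ((n:ℝ)+1)) + sinc (u + ((n:ℝ)+1)))
          * Real.cos (k*(((n:ℝ)+1)*Real.pi/R)))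
        (Real.cos (k*b) - sinc u) := by
    intro k hk
    have hG := has_pointwise_sum_fourier_series_of_summable scoeff ((k:ℝ) : AddCircle (2*R))
    have hGk : G ((k : ℝ) : AddCircle (2*R)) = ((Real.cos (k*b) : ℝ) : ℂ) := by
      show (AddCircle.liftIco (2*R) (-R) f₀) ((k:ℝ) : AddCircle (2*R)) = _
      rw [AddCircle.liftIco_coe_apply ⟨by linarith [hk.1], by linarith [hk.2]⟩]
    rw [hGk] at hG
    have hpair := hG.nat_add_neg
    have he : ∀ m : ℤ, (2*(Real.pi:ℂ)*Complex.I*((m:ℤ):ℂ)*((k:ℝ):ℂ)/((2*R:ℝ):ℂ))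
        = ((k*((m:ℝ)*Real.pi/R) : ℝ):ℂ)*Complex.I := by
      intro m
      push_cast
      field_simp
    have hterm : ∀ n : ℕ,
        (fourierCoeff (⇑G) ((n:ℕ):ℤ) • fourier ((n:ℕ):ℤ) ((k:ℝ) : AddCircle (2*R))
          + fourierCoeff (⇑G) (-((n:ℕ):ℤ)) • fourier (-((n:ℕ):ℤ)) ((k:ℝ) : AddCircle (2*R)))
        = ((((sinc (u - n) + sinc (u + n)) * Real.cos (k*((n:ℝ)*Real.pi/R))) : ℝ) : ℂ) := by
      intro n
      rw [coeff, coeff, fourier_coe_apply, fourier_coe_apply, he, he,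
        Complex.exp_mul_I, Complex.exp_mul_I, smul_eq_mul, smul_eq_mul]
      push_cast
      rw [show u - -(n:ℝ) = u + (n:ℝ) by ring, show u + -(n:ℝ) = u - (n:ℝ) by ring,
        show (k:ℂ)*(-((n:ℕ):ℂ)*(Real.pi:ℂ)/(R:ℂ)) = -((k:ℂ)*(((n:ℕ):ℂ)*(Real.pi:ℂ)/(R:ℂ))) by ring]
      simp only [Complex.cos_neg, Complex.sin_neg]
      ring
    rw [funext hterm] at hpair
    have hzero : fourierCoeff (⇑G) ((0:ℕ):ℤ) • fourier ((0:ℕ):ℤ) ((k:ℝ) : AddCircle (2*R))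
        = ((sinc u : ℝ):ℂ) := by
      rw [coeff]
      norm_num [fourier_zero]
    rw [show (((0:ℕ):ℤ)) = (0:ℤ) by norm_num] at hzero
    rw [hzero] at hpair
    rw [show ((Real.cos (k*b) :ℝ):ℂ) + ((sinc u :ℝ):ℂ) = (((Real.cos (k*b) + sinc u) :ℝ):ℂ)
      from by push_cast; ring] at hpair
    have hreal := Complex.hasSum_ofReal.mp hpair
    have h1 := (hasSum_nat_add_iff'
      (f := fun n : ℕ => (sinc (u - n) + sinc (u + n)) * Real.cos (k*((n:ℝ)*Real.pi/R))) 1).mpr hreal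
    simp only [Finset.range_one, Finset.sum_singleton] at h1
    have hfun : (fun n : ℕ => (sinc (u - ((n+1:ℕ):ℝ)) + sinc (u + ((n+1:ℕ):ℝ)))
          * Real.cos (k*(((n+1:ℕ):ℝ)*Real.pi/R)))
        = (fun n : ℕ => (sinc (u - ((n:ℝ)+1)) + sinc (u + ((n:ℝ)+1)))
          * Real.cos (k*(((n:ℝ)+1)*Real.pi/R))) := by
      funext n
      push_cast
      ring
    rw [hfun] at h1
    have hval : Real.cos (k*b) + sinc u
        - (sinc (u - ((0:ℕ):ℝ)) + sinc (u + ((0:ℕ):ℝ))) * Real.cos (k*(((0:ℕ):ℝ)*Real.pi/R))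
        = Real.cos (k*b) - sinc u := by
      norm_num
    rwa [hval] at h1
  -- interchange sum and integral
  set μ : Measure ℝ := MeasureTheory.volume.restrict (Set.Ioo 0 R) with hμ
  set F : ℕ → ℝ → ℝ := fun n k => (sinc (u - ((n:ℝ)+1)) + sinc (u + ((n:ℝ)+1)))
      * (φ k * Real.cos (k*(((n:ℝ)+1)*Real.pi/R))) with hF
  have hφcos : ∀ c : ℝ, ContinuousOn (fun k => φ k * Real.cos (k*c)) (Set.Icc 0 R) :=
    fun c => hφ.mul (Continuous.continuousOn (by continuity))
  have hφint : ∀ c : ℝ, IntegrableOn (fun k => φ k * Real.cos (k*c)) (Set.Ioo 0 R) :=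
    fun c => ((hφcos c).integrableOn_Icc).mono_set Set.Ioo_subset_Icc_self
  have hφ0 : IntegrableOn φ (Set.Ioo 0 R) := by
    have := hφint 0
    simpa using this
  have hFint : ∀ n, Integrable (F n) μ := fun n => ((hφint _).const_mul _)
  have hFsum : Summable (fun n => ∫ k, ‖F n k‖ ∂μ) := by
    have hshift : Summable (fun n : ℕ => |sinc (u - ((n:ℝ)+1)) + sinc (u + ((n:ℝ)+1))|
        * ∫ k, ‖φ k‖ ∂μ) := by
      have h2 := (summable_nat_add_iff 1).mpr baseAbs
      refine (h2.mul_right (∫ k, ‖φ k‖ ∂μ)).congr (fun n => ?_)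
      push_cast
      norm_num
    refine Summable.of_nonneg_of_le (fun n => MeasureTheory.integral_nonneg (fun k => norm_nonneg _))
      (fun n => ?_) hshift
    have h1 : ∀ k : ℝ, ‖F n k‖ = |sinc (u - ((n:ℝ)+1)) + sinc (u + ((n:ℝ)+1))|
        * ‖φ k * Real.cos (k*(((n:ℝ)+1)*Real.pi/R))‖ := by
      intro k
      rw [hF]
      simp [abs_mul]
    simp_rw [h1]
    rw [MeasureTheory.integral_const_mul]
    apply mul_le_mul_of_nonneg_left _ (abs_nonneg _)
    refine MeasureTheory.integral_mono ((hφint _).norm) (hφ0.norm) (fun k => ?_)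
    rw [norm_mul]
    calc ‖φ k‖ * ‖Real.cos (k*(((n:ℝ)+1)*Real.pi/R))‖
        ≤ ‖φ k‖ * 1 := mul_le_mul_of_nonneg_left (by
          rw [Real.norm_eq_abs]; exact Real.abs_cos_le_one _) (norm_nonneg _)
      _ = ‖φ k‖ := mul_one _
  have hswap := MeasureTheory.hasSum_integral_of_summable_integral_norm hFint hFsum
  have htsum : ∫ k, (∑' n, F n k) ∂μ = ∫ k, φ k * (Real.cos (k*b) - sinc u) ∂μ := by
    rw [hμ]
    refine MeasureTheory.setIntegral_congr_fun measurableSet_Ioo (fun k hk => ?_)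
    have hp := (point k hk).mul_left (φ k)
    rw [← hp.tsum_eq]
    exact tsum_congr (fun n => by rw [hF]; ring)
  have hIntEq : (fun n : ℕ => ∫ k, F n k ∂μ) = (fun n : ℕ =>
      (sinc (u - ((n:ℝ)+1)) + sinc (u + ((n:ℝ)+1)))
        * ∫ k in (0:ℝ)..R, φ k * Real.cos (k*(((n:ℝ)+1)*Real.pi/R))) := by
    funext n
    rw [hF]
    rw [MeasureTheory.integral_const_mul]
    congr 1
    rw [intervalIntegral.integral_of_le hR.le, MeasureTheory.integral_Ioc_eq_integral_Ioo]
  have hRHS : ∫ k, φ k * (Real.cos (k*b) - sinc u) ∂μ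
      = (∫ k in (0:ℝ)..R, φ k * Real.cos (k*b))
        - (∫ k in (0:ℝ)..R, φ k * Real.cos (k*0)) * sinc u := by
    have hpt : ∀ k : ℝ, φ k * (Real.cos (k*b) - sinc u)
        = φ k * Real.cos (k*b) - (φ k * Real.cos (k*0)) * sinc u := by
      intro k
      rw [mul_zero, Real.cos_zero]
      ring
    simp_rw [hpt]
    rw [MeasureTheory.integral_sub (hφint b) ((hφint 0).mul_const _),
      MeasureTheory.integral_mul_const _ _]
    rw [intervalIntegral.integral_of_le hR.le, MeasureTheory.integral_Ioc_eq_integral_Ioo,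
      intervalIntegral.integral_of_le hR.le, MeasureTheory.integral_Ioc_eq_integral_Ioo]
  rw [htsum, hRHS, hIntEq] at hswap
  have final2 := hswap.mul_left (Real.sqrt (2/Real.pi))
  convert final2 using 1
  · rfl
  · funext n
    ring
  · ring
end
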